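/- Let T be a bounded self-adjoint operator on a Hilbert space with ‖T² - T‖ ≤ c < 1/8. Then the circle {z ∈ ℂ : |z-1| = 1/2} lies in the resolvent set of T, and the operator P = (i/2π) ∮_{|z-1|=1/2} (T - z)^{-1} dz is an orthogonal projection satisfying ‖P - T‖ ≲ c. -/

import Mathlib

open ContinuousLinearMap


lemma ring_fact {A : Type*} [Ring A] (T x : A) (h1 : x * T = T * x) :
    x * x - x - (T * T - T) = -((T - x) * (T - (1 - x))) := by
  simp only [mul_sub, sub_mul, mul_one, one_mul, h1]
  noncomm_ring

section Aux

variable {H : Type} [NormedAddCommGroup H] [InnerProductSpace ℂ H] [CompleteSpace H]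

/-- Key spectral bound: every spectral value `λ` of `T` satisfies `‖λ * (λ - 1)‖ ≤ c`. -/
lemma aux_key [Nontrivial H] (T : H →L[ℂ] H) (c : ℝ) (hc : ‖T * T - T‖ ≤ c)
    {l : ℂ} (hl : l ∈ spectrum ℂ T) : ‖l * (l - 1)‖ ≤ c := by
  have hw : l * (l - 1) ∈ spectrum ℂ (T * T - T) := by
    by_contra hw
    have hu : IsUnit (algebraMap ℂ (H →L[ℂ] H) (l * (l - 1)) - (T * T - T)) :=
      spectrum.notMem_iff.mp hw
    have hfac : algebraMap ℂ (H →L[ℂ] H) (l * (l - 1)) - (T * T - T)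
        = -((T - algebraMap ℂ (H →L[ℂ] H) l) * (T - (1 - algebraMap ℂ (H →L[ℂ] H) l))) := by
      rw [show l * (l - 1) = l * l - l by ring, map_sub, map_mul]
      exact ring_fact T _ (Algebra.commutes l T)
    rw [hfac] at hu
    have hu2 : IsUnit ((T - algebraMap ℂ (H →L[ℂ] H) l)
        * (T - (1 - algebraMap ℂ (H →L[ℂ] H) l))) := by
      rcases hu.neg with h; simpa using h
    have haT : Commute (algebraMap ℂ (H →L[ℂ] H) l) T := Algebra.commutes l T
    have hcomm : Commute (T - algebraMap ℂ (H →L[ℂ] H) l)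
        (T - (1 - algebraMap ℂ (H →L[ℂ] H) l)) := by
      have h1 : Commute T (T - (1 - algebraMap ℂ (H →L[ℂ] H) l)) :=
        (Commute.refl T).sub_right (((Commute.one_left T).sub_left haT).symm)
      have h2 : Commute (algebraMap ℂ (H →L[ℂ] H) l)
          (T - (1 - algebraMap ℂ (H →L[ℂ] H) l)) :=
        haT.sub_right ((Commute.one_right _).sub_right (Commute.refl _))
      exact h1.sub_left h2
    have h3 := (hcomm.isUnit_mul_iff.mp hu2).1
    have h4 : IsUnit (algebraMap ℂ (H →L[ℂ] H) l - T) := by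
      have := h3.neg; rwa [neg_sub] at this
    exact spectrum.mem_iff.mp hl h4
  have := spectrum.norm_le_norm_of_mem hw
  exact le_trans (by simpa using this) hc

end Aux

section Aux2
variable {H : Type} [NormedAddCommGroup H] [InnerProductSpace ℂ H] [CompleteSpace H]

lemma aux_circle [Nontrivial H] (T : H →L[ℂ] H) (c : ℝ) (hsa : IsSelfAdjoint T)
    (hc : ‖T * T - T‖ ≤ c) (hc8 : c < 1 / 8) :
    ∀ z : ℂ, ‖z - 1‖ = 1 / 2 → z ∉ spectrum ℂ T := by
  intro z hz hmem
  have hre : (z.re : ℂ) = z := hsa.spectrumRestricts.rightInvOn hmem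
  have habs : |z.re - 1| = 1 / 2 := by
    rw [← hre, show ((z.re : ℂ) - 1) = ((z.re - 1 : ℝ) : ℂ) by push_cast; ring,
      Complex.norm_real, Real.norm_eq_abs] at hz
    exact hz
  have hb : ‖z * (z - 1)‖ ≤ c := aux_key T c hc hmem
  have hval : ‖z * (z - 1)‖ = |z.re * (z.re - 1)| := by
    rw [← hre, show ((z.re : ℂ) * ((z.re : ℂ) - 1)) = ((z.re * (z.re - 1) : ℝ) : ℂ) by
      push_cast; ring, Complex.norm_real, Real.norm_eq_abs]
    simp
  rw [hval] at hb
  rcases (abs_eq (by norm_num)).mp habs with h | h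
  · have : z.re = 3 / 2 := by linarith
    rw [this] at hb; norm_num [abs_of_pos] at hb; linarith
  · have : z.re = 1 / 2 := by linarith
    rw [this] at hb
    norm_num [abs_of_neg] at hb
    linarith
end Aux2

section Aux3
variable {H : Type} [NormedAddCommGroup H] [InnerProductSpace ℂ H] [CompleteSpace H]

/-- The resolvent kernel as a jointly-continuous map on `ℝ × spectrum ℂ T`. -/
noncomputable def resMapF (T : H →L[ℂ] H)
    (hole : ∀ z : ℂ, ‖z - 1‖ = 1 / 2 → z ∉ spectrum ℂ T) :
    C(ℝ × spectrum ℂ T, ℂ) := by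
  refine ⟨fun p => ((p.2 : ℂ) - circleMap 1 (1 / 2) p.1)⁻¹, ?_⟩
  refine Continuous.inv₀ ((continuous_subtype_val.comp continuous_snd).sub
    ((continuous_circleMap 1 (1 / 2)).comp continuous_fst)) fun p => ?_
  refine sub_ne_zero.mpr fun hEq => ?_
  have habs : ‖circleMap 1 (1 / 2) p.1 - 1‖ = 1 / 2 := by
    have := circleMap_mem_sphere (1 : ℂ) (by norm_num : (0:ℝ) ≤ 1 / 2) p.1
    simpa [Complex.dist_eq] using this
  exact hole _ habs (hEq ▸ p.2.2)

open Classical in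
/-- The (continuous) characteristic function of the part of the spectrum near `1`. -/
noncomputable def chiMap (T : H →L[ℂ] H)
    (hole : ∀ z : ℂ, ‖z - 1‖ = 1 / 2 → z ∉ spectrum ℂ T) :
    C(spectrum ℂ T, ℂ) := by
  refine ⟨fun l => if (l : ℂ) ∈ Metric.ball (1 : ℂ) (1 / 2) then 1 else 0, ?_⟩
  have hU : IsClopen {l : spectrum ℂ T | (l : ℂ) ∈ Metric.ball (1 : ℂ) (1 / 2)} := by
    constructor
    · have : {l : spectrum ℂ T | (l : ℂ) ∈ Metric.ball (1 : ℂ) (1 / 2)}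
          = (Subtype.val) ⁻¹' (Metric.closedBall (1 : ℂ) (1 / 2)) := by
        ext l
        simp only [Set.mem_setOf_eq, Set.mem_preimage, Metric.mem_ball, Metric.mem_closedBall]
        refine ⟨le_of_lt, fun h => lt_of_le_of_ne h fun hEq => ?_⟩
        exact hole _ (by rwa [Complex.dist_eq] at hEq) l.2
      rw [this]
      exact Metric.isClosed_closedBall.preimage continuous_subtype_val
    · exact Metric.isOpen_ball.preimage continuous_subtype_val
  refine Continuous.if ?_ continuous_const continuous_const
  intro a ha
  rw [hU.frontier_eq] at ha
  exact absurd ha (Set.notMem_empty a)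

end Aux3

section Aux4
variable {H : Type} [NormedAddCommGroup H] [InnerProductSpace ℂ H] [CompleteSpace H]

lemma circleMap_not_mem (T : H →L[ℂ] H)
    (hole : ∀ z : ℂ, ‖z - 1‖ = 1 / 2 → z ∉ spectrum ℂ T) (θ : ℝ) :
    circleMap 1 (1 / 2) θ ∉ spectrum ℂ T := by
  apply hole
  have := circleMap_mem_sphere (1 : ℂ) (by norm_num : (0:ℝ) ≤ 1 / 2) θ
  simpa [Complex.dist_eq] using this

lemma res_eq (T : H →L[ℂ] H) (hsa : IsSelfAdjoint T)
    (hole : ∀ z : ℂ, ‖z - 1‖ = 1 / 2 → z ∉ spectrum ℂ T) (θ : ℝ) :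
    Ring.inverse (T - circleMap 1 (1 / 2) θ • 1) =
      cfcHom hsa.isStarNormal ((resMapF T hole).curry θ) := by
  have hz : circleMap 1 (1 / 2) θ ∉ spectrum ℂ T := circleMap_not_mem T hole θ
  have hTz : T - circleMap 1 (1 / 2) θ • 1 =
      cfcHom hsa.isStarNormal (((ContinuousMap.id ℂ).restrict (spectrum ℂ T))
        - algebraMap ℂ C(spectrum ℂ T, ℂ) (circleMap 1 (1 / 2) θ)) := by
    rw [map_sub, cfcHom_id, AlgHomClass.commutes, Algebra.algebraMap_eq_smul_one]
  have hmul1 : (((ContinuousMap.id ℂ).restrict (spectrum ℂ T))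
      - algebraMap ℂ C(spectrum ℂ T, ℂ) (circleMap 1 (1 / 2) θ))
        * (resMapF T hole).curry θ = 1 := by
    ext l
    have hne : (l : ℂ) - circleMap 1 (1 / 2) θ ≠ 0 :=
      sub_ne_zero.mpr fun hEq => hz (hEq ▸ l.2)
    simp [resMapF, ContinuousMap.mul_apply, Algebra.algebraMap_eq_smul_one]
    exact mul_inv_cancel₀ (by simpa using hne)
  have hmul2 : (resMapF T hole).curry θ * (((ContinuousMap.id ℂ).restrict (spectrum ℂ T))
      - algebraMap ℂ C(spectrum ℂ T, ℂ) (circleMap 1 (1 / 2) θ)) = 1 := by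
    rw [mul_comm]; exact hmul1
  set u : (H →L[ℂ] H)ˣ :=
    { val := T - circleMap 1 (1 / 2) θ • 1
      inv := cfcHom hsa.isStarNormal ((resMapF T hole).curry θ)
      val_inv := by rw [hTz, ← map_mul, hmul1, map_one]
      inv_val := by rw [hTz, ← map_mul, hmul2, map_one] }
  show Ring.inverse (u : H →L[ℂ] H) = _
  rw [Ring.inverse_unit]
  rfl

end Aux4

section Aux5
variable {H : Type} [NormedAddCommGroup H] [InnerProductSpace ℂ H] [CompleteSpace H]

lemma integrable_aux (T : H →L[ℂ] H)
    (hole : ∀ z : ℂ, ‖z - 1‖ = 1 / 2 → z ∉ spectrum ℂ T) :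
    IntervalIntegrable (fun θ => deriv (circleMap 1 (1 / 2)) θ • (resMapF T hole).curry θ)
      MeasureTheory.volume 0 (2 * Real.pi) := by
  apply Continuous.intervalIntegrable
  have h1 : Continuous fun θ : ℝ => deriv (circleMap 1 (1 / 2)) θ := by
    simp only [deriv_circleMap]
    exact (continuous_circleMap 0 _).mul continuous_const
  exact h1.smul ((ContinuousMap.curry (resMapF T hole)).continuous)

lemma integral_eq (T : H →L[ℂ] H) (hsa : IsSelfAdjoint T)
    (hole : ∀ z : ℂ, ‖z - 1‖ = 1 / 2 → z ∉ spectrum ℂ T) :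
    (∮ z in C(1, 1 / 2), Ring.inverse (T - z • 1)) =
      cfcL (R := ℂ) hsa.isStarNormal
        (∫ θ in (0 : ℝ)..(2 * Real.pi),
          deriv (circleMap 1 (1 / 2)) θ • (resMapF T hole).curry θ) := by
  rw [← (cfcL (R := ℂ) hsa.isStarNormal).intervalIntegral_comp_comm (integrable_aux T hole)]
  unfold circleIntegral
  refine intervalIntegral.integral_congr fun θ _ => ?_
  rw [map_smul, cfcL_apply, ← res_eq T hsa hole θ]

end Aux5

section Aux6
variable {H : Type} [NormedAddCommGroup H] [InnerProductSpace ℂ H] [CompleteSpace H]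

lemma J_eq (T : H →L[ℂ] H)
    (hole : ∀ z : ℂ, ‖z - 1‖ = 1 / 2 → z ∉ spectrum ℂ T) :
    (∫ θ in (0 : ℝ)..(2 * Real.pi),
        deriv (circleMap 1 (1 / 2)) θ • (resMapF T hole).curry θ)
      = (-(2 * Real.pi * Complex.I)) • chiMap T hole := by
  ext l
  have hev : (∫ θ in (0 : ℝ)..(2 * Real.pi),
      deriv (circleMap 1 (1 / 2)) θ • (resMapF T hole).curry θ) l
      = ∫ θ in (0 : ℝ)..(2 * Real.pi),
          deriv (circleMap 1 (1 / 2)) θ • ((l : ℂ) - circleMap 1 (1 / 2) θ)⁻¹ := by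
    have h := (ContinuousMap.evalCLM ℂ l).intervalIntegral_comp_comm
      (integrable_aux T hole)
    have h2 : (ContinuousMap.evalCLM ℂ l) (∫ θ in (0 : ℝ)..(2 * Real.pi),
        deriv (circleMap 1 (1 / 2)) θ • (resMapF T hole).curry θ)
        = (∫ θ in (0 : ℝ)..(2 * Real.pi),
        deriv (circleMap 1 (1 / 2)) θ • (resMapF T hole).curry θ) l := rfl
    rw [← h2, ← h]
    refine intervalIntegral.integral_congr fun θ _ => ?_
    simp [resMapF, ContinuousMap.evalCLM]
  have hcirc : (∫ θ in (0 : ℝ)..(2 * Real.pi),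
      deriv (circleMap 1 (1 / 2)) θ • ((l : ℂ) - circleMap 1 (1 / 2) θ)⁻¹)
      = ∮ z in C(1, 1 / 2), ((l : ℂ) - z)⁻¹ := rfl
  have hneg : (∮ z in C(1, 1 / 2), ((l : ℂ) - z)⁻¹)
      = (-1 : ℂ) • ∮ z in C(1, 1 / 2), (z - (l : ℂ))⁻¹ := by
    rw [← circleIntegral.integral_smul]
    refine circleIntegral.integral_congr (by norm_num) fun z _ => ?_
    rw [← neg_sub, inv_neg]
    simp
  rw [hev, hcirc, hneg]
  by_cases hin : (l : ℂ) ∈ Metric.ball (1 : ℂ) (1 / 2)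
  · rw [circleIntegral.integral_sub_inv_of_mem_ball hin]
    simp only [ContinuousMap.smul_apply, chiMap, ContinuousMap.coe_mk, if_pos hin,
      smul_eq_mul]
    ring
  · have hgt : 1 / 2 < dist (l : ℂ) 1 := by
      rw [Metric.mem_ball] at hin
      rcases lt_or_eq_of_le (not_lt.mp hin) with h | h
      · exact h
      · exact absurd (hole _ (by rw [Complex.dist_eq] at h; exact h.symm) l.2) (by simp [l.2])
    have hzero : (∮ z in C(1, 1 / 2), (z - (l : ℂ))⁻¹) = 0 := by
      refine Complex.circleIntegral_eq_zero_of_differentiable_on_off_countable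
        (by norm_num) Set.countable_empty ?_ ?_
      · refine ContinuousOn.inv₀ (continuousOn_id.sub continuousOn_const) fun z hz => ?_
        refine sub_ne_zero.mpr fun hEq => ?_
        rw [Metric.mem_closedBall] at hz
        rw [hEq] at hz
        exact absurd (lt_of_lt_of_le hgt hz) (by simp)
      · intro z hz
        refine DifferentiableAt.inv (differentiableAt_id.sub (differentiableAt_const _)) ?_
        refine sub_ne_zero.mpr fun hEq => ?_
        have : dist z 1 < 1 / 2 := by simpa [Metric.mem_ball] using hz.1
        rw [hEq] at this
        exact absurd (hgt.trans this) (by simp)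
    rw [hzero]
    simp only [ContinuousMap.smul_apply, chiMap, ContinuousMap.coe_mk, if_neg hin,
      smul_eq_mul]
    simp

end Aux6

section Aux7
variable {H : Type} [NormedAddCommGroup H] [InnerProductSpace ℂ H] [CompleteSpace H]

lemma aux_main [Nontrivial H] (T : H →L[ℂ] H) (c : ℝ) (hsa : IsSelfAdjoint T)
    (hc : ‖T * T - T‖ ≤ c) (hc8 : c < 1 / 8) :
    IsIdempotentElem ((Complex.I / (2 * Real.pi)) •
        (∮ z in C(1, 1 / 2), Ring.inverse (T - z • 1))) ∧
      IsSelfAdjoint ((Complex.I / (2 * Real.pi)) •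
        (∮ z in C(1, 1 / 2), Ring.inverse (T - z • 1))) ∧
      ‖(Complex.I / (2 * Real.pi)) •
        (∮ z in C(1, 1 / 2), Ring.inverse (T - z • 1)) - T‖ ≤ 2 * c := by
  have hole := aux_circle T c hsa hc hc8
  have hc0 : (0 : ℝ) ≤ c := le_trans (norm_nonneg _) hc
  have hsc : (Complex.I / (2 * (Real.pi : ℂ))) * -(2 * (Real.pi : ℂ) * Complex.I) = 1 := by
    have hπ : ((Real.pi : ℂ)) ≠ 0 := Complex.ofReal_ne_zero.mpr Real.pi_ne_zero
    field_simp
    ring_nf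
    rw [Complex.I_sq]
    ring
  have hP : (Complex.I / (2 * Real.pi)) • (∮ z in C(1, 1 / 2), Ring.inverse (T - z • 1))
      = cfcHom hsa.isStarNormal (chiMap T hole) := by
    rw [integral_eq T hsa hole, J_eq T hole, map_smul, smul_smul, hsc, one_smul, cfcL_apply]
  refine ⟨?_, ?_, ?_⟩
  · rw [IsIdempotentElem, hP, ← map_mul]
    congr 1
    ext l
    simp only [ContinuousMap.mul_apply, chiMap, ContinuousMap.coe_mk]
    split_ifs <;> norm_num
  · rw [IsSelfAdjoint, hP, ← map_star]
    congr 1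
    ext l
    simp only [ContinuousMap.star_apply, chiMap, ContinuousMap.coe_mk]
    split_ifs <;> simp
  · rw [hP]
    have hrw : cfcHom hsa.isStarNormal (chiMap T hole) - T
        = cfcHom hsa.isStarNormal (chiMap T hole
            - (ContinuousMap.id ℂ).restrict (spectrum ℂ T)) := by
      rw [map_sub, cfcHom_id]
    rw [hrw, norm_cfcHom T _ hsa.isStarNormal]
    refine (ContinuousMap.norm_le _ (by linarith)).mpr fun l => ?_
    have hmul : ‖(l : ℂ)‖ * ‖(l : ℂ) - 1‖ ≤ c := by
      have := aux_key T c hc l.2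
      rwa [norm_mul] at this
    simp only [ContinuousMap.sub_apply, chiMap, ContinuousMap.coe_mk,
      ContinuousMap.restrict_apply, ContinuousMap.id_apply]
    split_ifs with hin
    · rw [Metric.mem_ball, Complex.dist_eq] at hin
      have hge : 1 / 2 ≤ ‖(l : ℂ)‖ := by
        have h := norm_sub_norm_le (1 : ℂ) (1 - (l : ℂ))
        rw [show (1 : ℂ) - (1 - (l : ℂ)) = (l : ℂ) by ring, norm_sub_rev] at h
        simp only [norm_one] at h
        linarith
      rw [norm_sub_rev]
      nlinarith [norm_nonneg ((l : ℂ) - 1)]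
    · rw [Metric.mem_ball, Complex.dist_eq, not_lt] at hin
      rw [zero_sub, norm_neg]
      nlinarith [norm_nonneg ((l : ℂ))]

end Aux7


/-- Let `T` be a bounded self-adjoint operator on a Hilbert space with
`‖T² - T‖ ≤ c < 1/8`. Then the circle `{z : |z-1| = 1/2}` lies in the resolvent set
of `T`, and `P = (i/2π) ∮_{|z-1|=1/2} (T - z)⁻¹ dz` is an orthogonal projection
with `‖P - T‖ ≤ C·c` for an absolute constant `C`. -/
theorem almost_projection_riesz :
    ∃ C : ℝ, 0 < C ∧
      ∀ (H : Type) [inst1 : NormedAddCommGroup H] [inst2 : InnerProductSpace ℂ H]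
        [inst3 : CompleteSpace H]
        (T : H →L[ℂ] H) (c : ℝ),
        IsSelfAdjoint T → ‖T * T - T‖ ≤ c → c < 1 / 8 →
        (∀ z : ℂ, ‖z - 1‖ = 1 / 2 → z ∉ spectrum ℂ T) ∧
        (IsIdempotentElem ((Complex.I / (2 * Real.pi)) •
              (∮ z in C(1, 1 / 2), Ring.inverse (T - z • 1))) ∧
          IsSelfAdjoint ((Complex.I / (2 * Real.pi)) •
              (∮ z in C(1, 1 / 2), Ring.inverse (T - z • 1))) ∧
          ‖(Complex.I / (2 * Real.pi)) •
              (∮ z in C(1, 1 / 2), Ring.inverse (T - z • 1)) - T‖ ≤ C * c) := by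
  refine ⟨2, by norm_num, ?_⟩
  intro H _ _ _ T c hsa hc hc8
  have hc0 : (0 : ℝ) ≤ c := le_trans (norm_nonneg _) hc
  rcases subsingleton_or_nontrivial H with hs | hn
  · haveI : Subsingleton (H →L[ℂ] H) :=
      ⟨fun f g => ContinuousLinearMap.ext fun x => Subsingleton.elim _ _⟩
    refine ⟨fun z _ => spectrum.notMem_iff.mpr (isUnit_of_subsingleton _),
      Subsingleton.elim _ _, Subsingleton.elim _ _, ?_⟩
    have h0 : (Complex.I / (2 * Real.pi)) •
        (∮ z in C(1, 1 / 2), Ring.inverse (T - z • 1)) - T = 0 :=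
      Subsingleton.elim _ _
    rw [h0, norm_zero]
    linarith
  · exact ⟨aux_circle T c hsa hc hc8, aux_main T c hsa hc hc8⟩
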